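/- For every n ≥ 2, the free abelian group ℤⁿ has full Reidemeister spectrum: Spec_R(ℤⁿ) = ℕ ∪ {∞}, i.e. for every k ∈ ℕ ∪ {∞} there exists an automorphism φ of ℤⁿ with R(φ) = k. -/

import Mathlib

open Matrix

noncomputable section

/-- Twisted conjugacy relation for an endomorphism `φ`. -/
def twistedConj {G : Type*} [Group G] (φ : G →* G) (g g' : G) : Prop :=
  ∃ h : G, g = h * g' * (φ h)⁻¹

/-- The Reidemeister number of an endomorphism: the number of twisted conjugacy classes. -/
noncomputable def reidemeisterNumber {G : Type*} [Group G] (φ : G →* G) : ℕ∞ :=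
  ENat.card (Quot (twistedConj φ))

/-- The Reidemeister spectrum of a group. -/
noncomputable def reidemeisterSpectrum (G : Type*) [Group G] : Set ℕ∞ :=
  {r : ℕ∞ | ∃ φ : G ≃* G, reidemeisterNumber (φ : G →* G) = r}


open Finset

private lemma quot_card_eq {G X : Type*} (r : G → G → Prop) (f : G → X)
    (h : ∀ g g', r g g' ↔ f g = f g') (hf : Function.Surjective f) :
    ENat.card (Quot r) = ENat.card X := by
  apply ENat.card_congr
  refine Equiv.ofBijective (Quot.lift f fun a b hab => (h a b).1 hab) ⟨?_, ?_⟩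
  · refine Quot.ind fun a => Quot.ind fun b hab => Quot.sound ((h a b).2 hab)
  · intro x; obtain ⟨g, rfl⟩ := hf x; exact ⟨Quot.mk _ g, rfl⟩

def compE (n : ℕ) (m : ℤ) (hn : 2 ≤ n) : (Fin n → ℤ) ≃+ (Fin n → ℤ) where
  toFun x i := if h : (i : ℕ) + 1 < n then x ⟨i + 1, h⟩
    else x ⟨0, by omega⟩ - m * x ⟨1, by omega⟩
  invFun y i := if h : (i : ℕ) = 0 then y ⟨n - 1, by omega⟩ + m * y ⟨0, by omega⟩
    else y ⟨(i : ℕ) - 1, by omega⟩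
  left_inv x := by
    funext i
    dsimp only
    by_cases h : (i : ℕ) = 0
    · rw [dif_pos h, dif_neg (show ¬(n - 1 + 1 < n) by omega),
        dif_pos (show 0 + 1 < n by omega)]
      have e1 : (⟨0 + 1, show 0 + 1 < n by omega⟩ : Fin n) = ⟨1, by omega⟩ := rfl
      have e2 : i = ⟨0, by omega⟩ := Fin.ext h
      rw [e1, e2]; ring
    · rw [dif_neg h, dif_pos (show ((⟨(i:ℕ) - 1, by omega⟩ : Fin n) : ℕ) + 1 < n by simp; omega)]
      congr 1
      exact Fin.ext (by simp; omega)
  right_inv y := by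
    funext i
    dsimp only
    by_cases h : (i : ℕ) + 1 < n
    · rw [dif_pos h, dif_neg (show ¬((i : ℕ) + 1 = 0) by omega)]
      congr 1
    · rw [dif_neg h, dif_pos rfl, dif_neg (show ¬((1:ℕ) = 0) by omega)]
      have e1 : (⟨1 - 1, by omega⟩ : Fin n) = (⟨0, by omega⟩ : Fin n) := rfl
      have e2 : (⟨n - 1, by omega⟩ : Fin n) = i := Fin.ext (by simp; omega)
      rw [e1, e2]; ring
  map_add' x y := by
    funext i
    by_cases h : (i : ℕ) + 1 < n
    · simp [dif_pos h]
    · simp [dif_neg h]; ring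

lemma compE_apply (n : ℕ) (m : ℤ) (hn : 2 ≤ n) (c : Fin n → ℤ) (i : Fin n) :
    compE n m hn c i = if h : (i : ℕ) + 1 < n then c ⟨i + 1, h⟩
      else c ⟨0, by omega⟩ - m * c ⟨1, by omega⟩ := rfl

lemma sum_sub_compE (n : ℕ) (m : ℤ) (hn : 2 ≤ n) (c : Fin n → ℤ) :
    ∑ i, (c i - compE n m hn c i) = m * c ⟨1, by omega⟩ := by
  set C : ℕ → ℤ := fun j => if h : j < n then c ⟨j, h⟩ else 0 with hC
  have hCv : ∀ i : Fin n, C (i : ℕ) = c i := fun i => by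
    simp [hC, i.is_lt]
  have step : ∀ i : Fin n, c i - compE n m hn c i =
      (fun j => C j - (if j + 1 < n then C (j + 1) else C 0 - m * C 1)) (i : ℕ) := by
    intro i
    rw [compE_apply]
    dsimp only
    by_cases h : (i : ℕ) + 1 < n
    · rw [dif_pos h, if_pos h, hCv, hC]
      simp [h]
    · rw [dif_neg h, if_neg h, hCv, hC]
      simp [show (0:ℕ) < n by omega, show (1:ℕ) < n by omega]
  calc ∑ i, (c i - compE n m hn c i)
      = ∑ i : Fin n, (fun j => C j - (if j + 1 < n then C (j + 1) else C 0 - m * C 1)) (i : ℕ) :=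
        Finset.sum_congr rfl fun i _ => step i
    _ = ∑ j ∈ range n, (C j - (if j + 1 < n then C (j + 1) else C 0 - m * C 1)) :=
        Fin.sum_univ_eq_sum_range (fun j => C j - (if j + 1 < n then C (j + 1) else C 0 - m * C 1)) n
    _ = ∑ j ∈ range n, C j - ∑ j ∈ range n, (if j + 1 < n then C (j + 1) else C 0 - m * C 1) :=
        Finset.sum_sub_distrib _ _
    _ = m * c ⟨1, by omega⟩ := by
        obtain ⟨k, rfl⟩ : ∃ k, n = k + 1 := ⟨n - 1, by omega⟩
        rw [Finset.sum_range_succ (f := fun j => if j + 1 < k + 1 then C (j + 1) else C 0 - m * C 1)]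
        rw [if_neg (by omega)]
        have : ∑ j ∈ range k, (if j + 1 < k + 1 then C (j + 1) else C 0 - m * C 1)
            = ∑ j ∈ range k, C (j + 1) := by
          refine Finset.sum_congr rfl fun j hj => ?_
          rw [if_pos (by simpa using Finset.mem_range.mp hj)]
        rw [this]
        have h2 := Finset.sum_range_succ' C k
        have h3 : C 1 = c ⟨1, by omega⟩ := by simp [hC, show (1:ℕ) < k + 1 by omega, show (1:ℕ) ≤ k by omega]
        rw [h3] at *
        omega

lemma exists_sub_compE (n : ℕ) (m : ℤ) (hn : 2 ≤ n) (y : Fin n → ℤ) (t : ℤ)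
    (ht : ∑ i, y i = m * t) : ∃ c : Fin n → ℤ, y = c - compE n m hn c := by
  set Y : ℕ → ℤ := fun j => if h : j < n then y ⟨j, h⟩ else 0 with hY
  have hYv : ∀ i : Fin n, Y (i : ℕ) = y i := fun i => by simp [hY, i.is_lt]
  have hsum : ∑ j ∈ range n, Y j = m * t := by
    rw [← Fin.sum_univ_eq_sum_range Y n, ← ht]
    exact Finset.sum_congr rfl fun i _ => hYv i
  refine ⟨fun i => t + Y 0 - ∑ j ∈ range (i : ℕ), Y j, ?_⟩
  funext i
  rw [Pi.sub_apply, compE_apply]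
  by_cases h : (i : ℕ) + 1 < n
  · rw [dif_pos h]
    dsimp only
    rw [Finset.sum_range_succ, hYv]
    ring
  · rw [dif_neg h]
    dsimp only
    have hi : (i : ℕ) = n - 1 := by omega
    have hn1 : n = (n - 1) + 1 := by omega
    have hlast : Y (n - 1) = y i := by
      rw [← hYv i, hi]
    have hsplit : ∑ j ∈ range n, Y j = ∑ j ∈ range (n - 1), Y j + Y (n - 1) := by
      conv_lhs => rw [hn1]
      exact Finset.sum_range_succ Y (n - 1)
    rw [hi, Finset.sum_range_zero, Finset.sum_range_one]
    rw [hsplit, hlast] at hsum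
    ring_nf
    ring_nf at hsum
    linarith

lemma tc_iff (n : ℕ) (m : ℕ) (hn : 2 ≤ n)
    (g g' : Multiplicative (Fin n → ℤ)) :
    twistedConj ((AddEquiv.toMultiplicative (compE n (m : ℤ) hn)) :
        Multiplicative (Fin n → ℤ) →* Multiplicative (Fin n → ℤ)) g g' ↔
      ((∑ i, Multiplicative.toAdd g i : ℤ) : ZMod m)
        = ((∑ i, Multiplicative.toAdd g' i : ℤ) : ZMod m) := by
  have key : twistedConj ((AddEquiv.toMultiplicative (compE n (m : ℤ) hn)) :
      Multiplicative (Fin n → ℤ) →* Multiplicative (Fin n → ℤ)) g g'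
      ↔ ∃ c : Fin n → ℤ, Multiplicative.toAdd g - Multiplicative.toAdd g'
          = c - compE n (m : ℤ) hn c := by
    constructor
    · rintro ⟨h, hh⟩
      refine ⟨Multiplicative.toAdd h, ?_⟩
      have h2 := congrArg Multiplicative.toAdd hh
      simp only [toAdd_mul, toAdd_inv, MonoidHom.coe_coe,
        AddEquiv.toMultiplicative_apply_apply, AddEquiv.toAddMonoidHom_eq_coe,
        AddMonoidHom.toMultiplicative_apply_apply, AddMonoidHom.coe_coe, toAdd_ofAdd] at h2
      rw [h2]; abel
    · rintro ⟨c, hc⟩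
      refine ⟨Multiplicative.ofAdd c, ?_⟩
      apply Multiplicative.toAdd.injective
      simp only [toAdd_mul, toAdd_inv, MonoidHom.coe_coe,
        AddEquiv.toMultiplicative_apply_apply, AddEquiv.toAddMonoidHom_eq_coe,
        AddMonoidHom.toMultiplicative_apply_apply, AddMonoidHom.coe_coe, toAdd_ofAdd]
      have h3 := sub_eq_iff_eq_add.mp hc
      rw [h3]; abel
  rw [key]
  constructor
  · rintro ⟨c, hc⟩
    have h1 : ∑ i, (Multiplicative.toAdd g - Multiplicative.toAdd g') i
        = (m : ℤ) * c ⟨1, by omega⟩ := by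
      rw [hc]
      simpa only [Pi.sub_apply] using sum_sub_compE n m hn c
    have hd : ∑ i, Multiplicative.toAdd g i - ∑ i, Multiplicative.toAdd g' i
        = (m : ℤ) * c ⟨1, by omega⟩ := by
      rw [← Finset.sum_sub_distrib]
      simpa only [Pi.sub_apply] using h1
    rw [ZMod.intCast_eq_intCast_iff]
    exact Int.ModEq.symm (Int.modEq_iff_dvd.mpr ⟨c ⟨1, by omega⟩, by linarith⟩)
  · intro hcast
    rw [ZMod.intCast_eq_intCast_iff] at hcast
    obtain ⟨t, ht⟩ := Int.modEq_iff_dvd.mp hcast.symm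
    exact exists_sub_compE n m hn (Multiplicative.toAdd g - Multiplicative.toAdd g') t (by
      simp only [Pi.sub_apply]
      rw [Finset.sum_sub_distrib]
      omega)

/-- For `n ≥ 2`, the free abelian group `ℤⁿ` has full Reidemeister spectrum
`ℕ ∪ {∞}` (all positive integers together with `∞`, i.e. all nonzero values). -/
theorem stmt19 (n : ℕ) (hn : 2 ≤ n) :
    reidemeisterSpectrum (Multiplicative (Fin n → ℤ)) = {r : ℕ∞ | r ≠ 0} := by
  haveI : Nonempty (Fin n) := ⟨⟨0, by omega⟩⟩
  ext r
  simp only [reidemeisterSpectrum, Set.mem_setOf_eq]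
  constructor
  · rintro ⟨φ, rfl⟩
    intro h0
    rw [reidemeisterNumber, ENat.card_eq_zero_iff_empty] at h0
    exact h0.false (Quot.mk _ 1)
  · intro hr
    induction r using ENat.recTopCoe with
    | top =>
      refine ⟨MulEquiv.refl _, ?_⟩
      rw [reidemeisterNumber,
        quot_card_eq _ (id : Multiplicative (Fin n → ℤ) → Multiplicative (Fin n → ℤ))
          (fun g g' => ?_) Function.surjective_id]
      · haveI : Infinite (Fin n → ℤ) := inferInstance
        haveI : Infinite (Multiplicative (Fin n → ℤ)) :=
          Infinite.of_injective Multiplicative.ofAdd Multiplicative.ofAdd.injective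
        exact ENat.card_eq_top_of_infinite
      · constructor
        · rintro ⟨h, rfl⟩
          simp only [id, MulEquiv.coe_refl, MonoidHom.coe_coe]
          rw [mul_comm h g', mul_assoc]
          simp
        · rintro rfl
          exact ⟨1, by simp⟩
    | coe m =>
      have hm : m ≠ 0 := by
        intro h; subst h; simp at hr
      haveI : NeZero m := ⟨hm⟩
      refine ⟨AddEquiv.toMultiplicative (compE n (m : ℤ) hn), ?_⟩
      rw [reidemeisterNumber,
        quot_card_eq _ (fun g => (((∑ i, (Multiplicative.toAdd g) i) : ℤ) : ZMod m))
          (tc_iff n m hn) ?_]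
      · rw [ENat.card_eq_coe_fintype_card, ZMod.card]
      · intro z
        obtain ⟨k, rfl⟩ := ZMod.intCast_surjective z
        refine ⟨Multiplicative.ofAdd (fun i => if (i : ℕ) = 0 then k else 0), ?_⟩
        simp only [toAdd_ofAdd]
        congr 1
        rw [Fin.sum_univ_eq_sum_range (fun j => if j = 0 then k else 0) n,
          Finset.sum_ite_eq' (Finset.range n) 0 (fun _ => k),
          if_pos (Finset.mem_range.mpr (by omega))]
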